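/- Any infinite circuit of a transversal matroid contains an element which does not lie in any finite circuit. -/

import Mathlib

open Set

section Bipartite

variable {V W : Type*}

/-- `m` is a matching in the bipartite graph with edge set `E ⊆ V × W`. -/
def IsBipMatching (E m : Set (V × W)) : Prop :=
  m ⊆ E ∧ ∀ p ∈ m, ∀ q ∈ m, (p.1 = q.1 ∨ p.2 = q.2) → p = q

/-- `I ⊆ V` is matchable in the bipartite graph with edge set `E`. -/
def Matchable (E : Set (V × W)) (I : Set V) : Prop :=
  ∃ m, IsBipMatching E m ∧ Prod.fst '' m = I

/-- One step along an edge of `F` in the bipartite graph, on vertex type `V ⊕ W`. -/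
def bipStep (F : Set (V × W)) : (V ⊕ W) → (V ⊕ W) → Prop := fun a b =>
  match a, b with
  | Sum.inl v, Sum.inr w => (v, w) ∈ F
  | Sum.inr w, Sum.inl v => (v, w) ∈ F
  | _, _ => False

/-- Every connected component of the bipartite graph with edge set `F` is finite. -/
def FiniteComponents (F : Set (V × W)) : Prop :=
  ∀ x : V ⊕ W, {y | Relation.ReflTransGen (bipStep F) x y}.Finite

/-- `m` is an `m0`-matching: a matching such that every component of `m0 ∪ m` is finite. -/
def IsM0Matching (E m0 m : Set (V × W)) : Prop :=
  IsBipMatching E m ∧ FiniteComponents (m0 ∪ m)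

/-- `I` is `m0`-matchable. -/
def M0Matchable (E m0 : Set (V × W)) (I : Set V) : Prop :=
  ∃ m, IsM0Matching E m0 m ∧ Prod.fst '' m = I

/-- `I` is `m0`-matchable onto `W'`. -/
def M0MatchableOnto (E m0 : Set (V × W)) (I : Set V) (W' : Set W) : Prop :=
  ∃ m, IsM0Matching E m0 m ∧ Prod.fst '' m = I ∧ Prod.snd '' m = W'

end Bipartite

section Star

variable {V : Type*}

/-- The edge set of the converted bimaze of the dimaze `(D, B0)`: the right class is
`{v ∣ v ∉ B0}` (representing `(V \ B0)⋆`) and the edges are the identity matching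
together with `v u⋆` for every edge `(u, v)` of `D`. -/
def starEdges (D : V → V → Prop) (B0 : Set V) : Set (V × V) :=
  {p | (p.1 = p.2 ∧ p.2 ∉ B0) ∨ (D p.2 p.1 ∧ p.2 ∉ B0)}

/-- The identity matching of the converted bimaze. -/
def starM0 (B0 : Set V) : Set (V × V) := {p | p.1 = p.2 ∧ p.1 ∉ B0}

end Star
/-- Deletion of `X` from the matroid `M`. -/
def Matroid.del {α : Type*} (M : Matroid α) (X : Set α) : Matroid α := M.restrict (M.E \ X)

/-- Contraction of `X` in the matroid `M`, defined via duality. -/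
def Matroid.con {α : Type*} (M : Matroid α) (X : Set α) : Matroid α := (M.dual.del X).dual

/-- `C` is a circuit of `M`: a minimal dependent set. -/
def Matroid.IsCircuitOf {α : Type*} (M : Matroid α) (C : Set α) : Prop :=
  C ⊆ M.E ∧ ¬ M.Indep C ∧ ∀ C' ⊂ C, M.Indep C'

/-- `e` is a coloop of `M`: an element of the ground set lying in no circuit. -/
def Matroid.IsColoopOf {α : Type*} (M : Matroid α) (e : α) : Prop :=
  e ∈ M.E ∧ ∀ C, M.IsCircuitOf C → e ∉ C

/-- `N` is a minor of `M`. -/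
def Matroid.IsMinorOf {α : Type*} (N M : Matroid α) : Prop :=
  ∃ C D, C ⊆ M.E ∧ D ⊆ M.E ∧ Disjoint C D ∧ N = (M.con C).del D

theorem infinite_circuit_of_transversal {V W : Type*} (E : Set (V × W)) (M : Matroid V)
    (hE : M.E = Set.univ) (hInd : ∀ I, M.Indep I ↔ Matchable E I)
    (C : Set V) (hC : M.IsCircuitOf C) (hCinf : C.Infinite) :
    ∃ x ∈ C, ∀ C', M.IsCircuitOf C' → C'.Finite → x ∉ C' := by
  by_contra h
  push_neg at h
  classical
  -- every element of C lies in a finite circuit, hence has finite neighbourhood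
  have hfin : ∀ x ∈ C, {w | (x, w) ∈ E}.Finite := by
    intro x hx
    obtain ⟨D, hD, hDfin, hxD⟩ := h x hx
    by_contra hinf
    replace hinf : {w | (x, w) ∈ E}.Infinite := hinf
    -- D \ {x} is a proper subset of D, hence matchable
    have hss : D \ {x} ⊂ D := Set.sdiff_singleton_ssubset.mpr hxD
    obtain ⟨m, hm, hmfst⟩ := (hInd _).mp (hD.2.2 _ hss)
    have hmfin : m.Finite := by
      have : Set.InjOn Prod.fst m := by
        intro p hp q hq hpq
        exact hm.2 p hp q hq (Or.inl hpq)
      exact Set.Finite.of_finite_image (hmfst ▸ hDfin.diff (t := {x})) this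
    have hsnd : (Prod.snd '' m).Finite := hmfin.image _
    obtain ⟨w, hwE, hwm⟩ : ∃ w, (x, w) ∈ E ∧ w ∉ Prod.snd '' m := by
      obtain ⟨w, hw⟩ := (hinf.diff hsnd).nonempty
      exact ⟨w, hw.1, hw.2⟩
    have hxm : x ∉ Prod.fst '' m := by
      rw [hmfst]; simp
    -- extend the matching to all of D
    have : Matchable E D := by
      refine ⟨insert (x, w) m, ⟨?_, ?_⟩, ?_⟩
      · intro p hp
        rcases hp with rfl | hp
        · exact hwE
        · exact hm.1 hp
      · intro p hp q hq hpq
        rcases hp with rfl | hp <;> rcases hq with rfl | hq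
        · rfl
        · exfalso
          rcases hpq with h1 | h2
          · exact hxm ⟨q, hq, h1.symm⟩
          · exact hwm ⟨q, hq, h2.symm⟩
        · exfalso
          rcases hpq with h1 | h2
          · exact hxm ⟨p, hp, h1⟩
          · exact hwm ⟨p, hp, h2⟩
        · exact hm.2 p hp q hq hpq
      · rw [Set.image_insert_eq, hmfst]
        simp only [Set.insert_diff_singleton]
        exact Set.insert_eq_self.mpr hxD
    exact hD.2.1 ((hInd D).mpr this)
  -- neighbourhoods as finsets
  set t : C → Finset W := fun x => (hfin x.1 x.2).toFinset with ht
  -- Hall's condition holds, since every finite subset of C is a proper subset, hence matchable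
  have hall : ∀ s : Finset C, s.card ≤ (s.biUnion t).card := by
    intro s
    rcases s.eq_empty_or_nonempty with rfl | ⟨x0, hx0⟩
    · simp
    set s' : Set V := Subtype.val '' (s : Set C) with hs'
    have hs'fin : s'.Finite := (s.finite_toSet.image _)
    have hs'C : s' ⊂ C := by
      constructor
      · rintro v ⟨x, _, rfl⟩; exact x.2
      · intro hsub
        exact hCinf (hs'fin.subset hsub)
    obtain ⟨m, hm, hmfst⟩ := (hInd _).mp (hC.2.2 _ hs'C)
    have hex : ∀ x : C, x ∈ s → ∃ w, (x.1, w) ∈ m := by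
      intro x hx
      have : x.1 ∈ Prod.fst '' m := by
        rw [hmfst]; exact ⟨x, by simpa using hx, rfl⟩
      obtain ⟨p, hp, hp1⟩ := this
      exact ⟨p.2, by rwa [← hp1, Prod.mk.eta]⟩
    obtain ⟨w0, -⟩ := hex x0 hx0
    set g : C → W := fun x => if hx : ∃ w, (x.1, w) ∈ m then hx.choose else w0 with hg
    have hgm : ∀ x : C, x ∈ s → (x.1, g x) ∈ m := by
      intro x hx
      have hx' := hex x hx
      simp only [hg, dif_pos hx']
      exact hx'.choose_spec
    refine Finset.card_le_card_of_injOn g ?_ ?_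
    · intro x hx
      have hE' := hm.1 (hgm x hx)
      refine Finset.mem_biUnion.mpr ⟨x, hx, ?_⟩
      simp only [ht, Set.Finite.mem_toFinset]
      exact hE'
    · intro x hx y hy hxy
      have h1 := hgm x (by simpa using hx)
      have h2 := hgm y (by simpa using hy)
      have := hm.2 _ h1 _ h2 (Or.inr (by simpa using hxy))
      exact Subtype.ext (congrArg Prod.fst this)
  -- apply Hall's theorem to match C, contradicting that C is dependent
  obtain ⟨f, hfinj, hf⟩ := (Finset.all_card_le_biUnion_card_iff_exists_injective t).mp hall
  have : Matchable E C := by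
    refine ⟨Set.range (fun x : C => (x.1, f x)), ⟨?_, ?_⟩, ?_⟩
    · rintro p ⟨x, rfl⟩
      have := hf x
      simp only [ht, Set.Finite.mem_toFinset] at this
      exact this
    · rintro p ⟨x, rfl⟩ q ⟨y, rfl⟩ hpq
      rcases hpq with h1 | h2
      · have : x = y := Subtype.ext h1
        rw [this]
      · have : x = y := hfinj h2
        rw [this]
    · ext v
      simp only [Set.mem_image, Set.mem_range]
      constructor
      · rintro ⟨p, ⟨x, rfl⟩, rfl⟩; exact x.2
      · intro hv; exact ⟨(v, f ⟨v, hv⟩), ⟨⟨v, hv⟩, rfl⟩, rfl⟩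
  exact hC.2.1 ((hInd C).mpr this)
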